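/- Let $C : X \times \mathcal{P}(Y) \to \mathbb{R}$ satisfy: $\Gamma \subset X\times\mathcal{P}(Y)$ is $C$-monotone and for every $x$, $p \mapsto C(x,p)$ is convex. Then the enlarged set $\tilde\Gamma := \Gamma \cup \{(x, \frac1k\sum_{i=1}^k p_i) : x\in X,\ (x,p_i)\in\Gamma \text{ for } i=1,\ldots,k,\ k\in\mathbb{N}\}$ is also $C$-monotone. -/

import Mathlib

open MeasureTheory Filter Topology

noncomputable section

-- Jensen for finite uniform averages
lemma jensen_aux {X Y : Type*} [MeasurableSpace Y] (C : X → Measure Y → ℝ)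
    (hconvex : ∀ (x : X) (p q : Measure Y), IsProbabilityMeasure p →
      IsProbabilityMeasure q → ∀ a b : NNReal, a + b = 1 →
      C x ((a : ENNReal) • p + (b : ENNReal) • q) ≤ a * C x p + b * C x q)
    (x : X) :
    ∀ (k : ℕ), 0 < k → ∀ (P : Fin k → Measure Y),
      (∀ j, IsProbabilityMeasure (P j)) →
      C x ((k : ENNReal)⁻¹ • ∑ j, P j) ≤ (k : ℝ)⁻¹ * ∑ j, C x (P j) := by
  intro k
  induction k with
  | zero => intro h; exact absurd h (lt_irrefl 0)
  | succ k ih =>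
    intro _ P hP
    rcases Nat.eq_zero_or_pos k with hk0 | hkpos
    · subst hk0
      simp [Fin.sum_univ_one]
    · have hkne : (k : ENNReal) ≠ 0 := Nat.cast_ne_zero.2 hkpos.ne'
      have hktop : (k : ENNReal) ≠ ⊤ := ENNReal.natCast_ne_top k
      set S : Measure Y := ∑ j : Fin k, P j.castSucc with hSdef
      set μ : Measure Y := (k : ENNReal)⁻¹ • S with hμdef
      have hμprob : IsProbabilityMeasure μ := by
        constructor
        have hSuniv : S Set.univ = k := by
          rw [hSdef]
          rw [show ((∑ j : Fin k, P j.castSucc) Set.univ)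
              = ∑ j : Fin k, (P j.castSucc) Set.univ by
            simp [Measure.coe_finset_sum]]
          simp [measure_univ]
        rw [hμdef, Measure.smul_apply, hSuniv, smul_eq_mul,
          ENNReal.inv_mul_cancel hkne hktop]
      set a : NNReal := (k : NNReal) / ((k : NNReal) + 1) with hadef
      set b : NNReal := ((k : NNReal) + 1)⁻¹ with hbdef
      have h1ne : ((k : NNReal) + 1) ≠ 0 := by positivity
      have hab : a + b = 1 := by
        rw [hadef, hbdef, ← one_div, ← add_div, div_self h1ne]
      have hcoe1 : (((k : NNReal) + 1 : NNReal) : ENNReal) = (k : ENNReal) + 1 := by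
        push_cast; ring
      have hbcoe : ((b : NNReal) : ENNReal) = ((k : ENNReal) + 1)⁻¹ := by
        rw [hbdef, ENNReal.coe_inv h1ne, hcoe1]
      have hacoe : ((a : NNReal) : ENNReal) = (k : ENNReal) * ((k : ENNReal) + 1)⁻¹ := by
        rw [hadef, ENNReal.coe_div h1ne, hcoe1, div_eq_mul_inv]
        simp
      have hcast : ((k + 1 : ℕ) : ENNReal) = (k : ENNReal) + 1 := by push_cast; ring
      have key : ((k + 1 : ℕ) : ENNReal)⁻¹ • ∑ j : Fin (k+1), P j
          = ((a : NNReal) : ENNReal) • μ + ((b : NNReal) : ENNReal) • P (Fin.last k) := by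
        rw [Fin.sum_univ_castSucc (f := P), ← hSdef, hcast, smul_add, hμdef, smul_smul,
          hacoe, hbcoe]
        have : (k : ENNReal) * ((k : ENNReal) + 1)⁻¹ * (k : ENNReal)⁻¹
            = ((k : ENNReal) + 1)⁻¹ := by
          rw [mul_comm (k : ENNReal), mul_assoc, ENNReal.mul_inv_cancel hkne hktop, mul_one]
        rw [this]
      have hstep := hconvex x μ (P (Fin.last k)) hμprob (hP _) a b hab
      have hih := ih hkpos (fun j => P j.castSucc) (fun j => hP _)
      have hanneg : (0:ℝ) ≤ (a : ℝ) := a.coe_nonneg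
      have hk0R : (0:ℝ) < (k : ℝ) := by exact_mod_cast hkpos
      have haR : (a : ℝ) = (k : ℝ) / ((k : ℝ) + 1) := by
        rw [hadef]; push_cast; ring
      have hbR : (b : ℝ) = ((k : ℝ) + 1)⁻¹ := by
        rw [hbdef]; push_cast; ring
      calc C x (((k + 1 : ℕ) : ENNReal)⁻¹ • ∑ j : Fin (k+1), P j)
          = C x (((a : NNReal) : ENNReal) • μ + ((b : NNReal) : ENNReal) • P (Fin.last k)) := by
            rw [key]
        _ ≤ a * C x μ + b * C x (P (Fin.last k)) := hstep
        _ ≤ a * ((k : ℝ)⁻¹ * ∑ j : Fin k, C x (P j.castSucc)) + b * C x (P (Fin.last k)) := by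
            have := mul_le_mul_of_nonneg_left hih hanneg
            linarith
        _ = ((k + 1 : ℕ) : ℝ)⁻¹ * ∑ j : Fin (k+1), C x (P j) := by
            rw [Fin.sum_univ_castSucc (f := fun j => C x (P j)), haR, hbR]
            push_cast
            field_simp

/-- A set `Γ ⊆ X × 𝒫(Y)` is `C`-monotone if for all finitely many `(x_i,p_i) ∈ Γ`
and competitor probability measures `q_i` with `∑ p_i = ∑ q_i`, the `C`-cost of the
`p_i` does not exceed that of the `q_i`. -/
def CMonotoneSet {X Y : Type*} [MeasurableSpace Y]
    (C : X → Measure Y → ℝ) (Γ : Set (X × Measure Y)) : Prop :=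
  ∀ (N : ℕ) (x : Fin N → X) (p q : Fin N → Measure Y),
    (∀ i, (x i, p i) ∈ Γ) → (∀ i, IsProbabilityMeasure (q i)) →
    (∑ i, p i) = (∑ i, q i) →
    (∑ i, C (x i) (p i)) ≤ ∑ i, C (x i) (q i)

/-- **Remark 2.2 (b)**: if `Γ` is `C`-monotone and `C(x,·)` is convex for every `x`,
then the set enlarged by all finite uniform averages `(x, k⁻¹ ∑ᵢ pᵢ)` with
`(x,pᵢ) ∈ Γ` is also `C`-monotone. -/
theorem enlarged_CMonotone {X Y : Type*} [MeasurableSpace Y]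
    (C : X → Measure Y → ℝ) (Γ : Set (X × Measure Y))
    (hΓprob : ∀ xp ∈ Γ, IsProbabilityMeasure xp.2)
    (hconvex : ∀ (x : X) (p q : Measure Y), IsProbabilityMeasure p →
      IsProbabilityMeasure q → ∀ a b : NNReal, a + b = 1 →
      C x ((a : ENNReal) • p + (b : ENNReal) • q) ≤ a * C x p + b * C x q)
    (hmono : CMonotoneSet C Γ) :
    CMonotoneSet C
      (Γ ∪ {xp | ∃ (k : ℕ) (_ : 0 < k) (p : Fin k → Measure Y),
        (∀ i, (xp.1, p i) ∈ Γ) ∧ xp.2 = (k : ENNReal)⁻¹ • ∑ i, p i}) := by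
  intro N x p q hp hq hsum
  classical
  have hdata : ∀ i, ∃ (k : ℕ), 0 < k ∧ ∃ P : Fin k → Measure Y,
      (∀ j, (x i, P j) ∈ Γ) ∧ p i = (k : ENNReal)⁻¹ • ∑ j, P j := by
    intro i
    rcases hp i with h | ⟨k, hk, P, hPΓ, hPsum⟩
    · exact ⟨1, one_pos, fun _ => p i, fun _ => h, by simp⟩
    · exact ⟨k, hk, P, hPΓ, hPsum⟩
  choose k hk P hPΓ hPsum using hdata
  set K := ∏ i, k i with hKdef
  have hKpos : 0 < K := Finset.prod_pos fun i _ => hk i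
  have hdvd : ∀ i, k i ∣ K := fun i => Finset.dvd_prod_of_mem _ (Finset.mem_univ i)
  have hS : ∀ i, ∑ j, P i j = (k i : ENNReal) • p i := by
    intro i
    rw [hPsum i, smul_smul, ENNReal.mul_inv_cancel
      (by exact_mod_cast (hk i).ne') (ENNReal.natCast_ne_top _), one_smul]
  -- big index type
  set I := (i : Fin N) × (Fin (k i) × Fin (K / k i)) with hIdef
  set e : I ≃ Fin (Fintype.card I) := Fintype.equivFin I with hedef
  -- sum of p-parts over big index
  have hPsumBig : ∑ z : I, P z.1 z.2.1 = (K : ENNReal) • ∑ i, p i := by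
    rw [← Finset.univ_sigma_univ, Finset.sum_sigma, Finset.smul_sum]
    refine Finset.sum_congr rfl fun i _ => ?_
    rw [show (∑ jm : Fin (k i) × Fin (K / k i), P i jm.1)
        = ∑ j : Fin (k i), ∑ _l : Fin (K / k i), P i j from
      Fintype.sum_prod_type _]
    simp only [Finset.sum_const, Finset.card_univ, Fintype.card_fin]
    simp_rw [← Nat.cast_smul_eq_nsmul (R := ENNReal)]
    rw [← Finset.smul_sum, hS i, smul_smul, ← Nat.cast_mul, Nat.div_mul_cancel (hdvd i)]
  have hqsumBig : ∑ z : I, q z.1 = (K : ENNReal) • ∑ i, q i := by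
    rw [← Finset.univ_sigma_univ, Finset.sum_sigma, Finset.smul_sum]
    refine Finset.sum_congr rfl fun i _ => ?_
    simp only [Finset.sum_const, Finset.card_univ, Fintype.card_prod, Fintype.card_fin]
    rw [Nat.mul_div_cancel' (hdvd i), ← Nat.cast_smul_eq_nsmul (R := ENNReal)]
  -- transport sums over `I` to sums over `Fin (card I)`
  have tr : ∀ (f : I → Measure Y),
      ∑ j : Fin (Fintype.card I), f (e.symm j) = ∑ z : I, f z :=
    fun f => Fintype.sum_equiv e.symm _ _ (fun j => rfl)
  have trR : ∀ (f : I → ℝ),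
      ∑ j : Fin (Fintype.card I), f (e.symm j) = ∑ z : I, f z :=
    fun f => Fintype.sum_equiv e.symm _ _ (fun j => rfl)
  -- apply C-monotonicity of Γ to the big family
  have hbig : ∑ z : I, C (x z.1) (P z.1 z.2.1) ≤ ∑ z : I, C (x z.1) (q z.1) := by
    have h := hmono (Fintype.card I)
      (fun j => x (e.symm j).1)
      (fun j => P (e.symm j).1 (e.symm j).2.1)
      (fun j => q (e.symm j).1)
      (fun j => hPΓ _ _)
      (fun j => hq _)
      (by
        rw [tr (fun z => P z.1 z.2.1), tr (fun z => q z.1), hPsumBig, hqsumBig, hsum])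
    rwa [trR (fun z => C (x z.1) (P z.1 z.2.1)), trR (fun z => C (x z.1) (q z.1))] at h
  -- the q-side big sum
  have hqC : ∑ z : I, C (x z.1) (q z.1) = (K : ℝ) * ∑ i, C (x i) (q i) := by
    rw [← Finset.univ_sigma_univ, Finset.sum_sigma, Finset.mul_sum]
    refine Finset.sum_congr rfl fun i _ => ?_
    simp only [Finset.sum_const, Finset.card_univ, Fintype.card_prod, Fintype.card_fin,
      nsmul_eq_mul]
    rw [Nat.mul_div_cancel' (hdvd i)]
  -- the p-side big sum, bounded below via Jensen
  have hpC : (K : ℝ) * ∑ i, C (x i) (p i) ≤ ∑ z : I, C (x z.1) (P z.1 z.2.1) := by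
    rw [← Finset.univ_sigma_univ, Finset.sum_sigma, Finset.mul_sum]
    refine Finset.sum_le_sum fun i _ => ?_
    have hjensen := jensen_aux C hconvex (x i) (k i) (hk i) (P i)
      (fun j => hΓprob _ (hPΓ i j))
    rw [← hPsum i] at hjensen
    have hkiR : (0:ℝ) < (k i : ℝ) := by exact_mod_cast hk i
    have h1 : (k i : ℝ) * C (x i) (p i) ≤ ∑ j : Fin (k i), C (x i) (P i j) := by
      rw [mul_comm]
      exact (le_div_iff₀ hkiR).mp (by rw [div_eq_inv_mul]; exact hjensen)
    calc (K : ℝ) * C (x i) (p i)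
        = ((K / k i : ℕ) : ℝ) * ((k i : ℝ) * C (x i) (p i)) := by
          rw [← mul_assoc, ← Nat.cast_mul, Nat.div_mul_cancel (hdvd i)]
      _ ≤ ((K / k i : ℕ) : ℝ) * ∑ j : Fin (k i), C (x i) (P i j) := by
          exact mul_le_mul_of_nonneg_left h1 (by positivity)
      _ = ∑ jm : Fin (k i) × Fin (K / k i), C (x i) (P i jm.1) := by
          rw [Fintype.sum_prod_type]
          simp only [Finset.sum_const, Finset.card_univ, Fintype.card_fin, nsmul_eq_mul]
          rw [Finset.mul_sum]
  have hKR : (0:ℝ) < (K : ℝ) := by exact_mod_cast hKpos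
  have : (K : ℝ) * ∑ i, C (x i) (p i) ≤ (K : ℝ) * ∑ i, C (x i) (q i) := by
    calc (K : ℝ) * ∑ i, C (x i) (p i) ≤ ∑ z : I, C (x z.1) (P z.1 z.2.1) := hpC
      _ ≤ ∑ z : I, C (x z.1) (q z.1) := hbig
      _ = (K : ℝ) * ∑ i, C (x i) (q i) := hqC
  exact le_of_mul_le_mul_left this hKR
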